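/- Let R be a semiring with a finite additive spine M of cardinality m, and V an R-module generated by a finite set S of cardinality s. Then every summand absorbing submodule of V is generated by at most m·s elements. -/

import Mathlib

def halo (R : Type*) {V : Type*} [Semiring R] [AddCommMonoid V] [Module R V]
    (S : Set V) : Set V :=
  {v | ∃ l m : R, l • v ∈ S ∧ m • (l • v) = v}

def IsAdditiveSpine (R : Type*) {V : Type*} [Semiring R] [AddCommMonoid V] [Module R V]
    (S : Set V) : Prop :=
  AddSubmonoid.closure (halo R S) = ⊤

def IsSA {R V : Type*} [Semiring R] [AddCommMonoid V] [Module R V]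
    (W : Submodule R V) : Prop :=
  ∀ x y : V, x + y ∈ W → x ∈ W ∧ y ∈ W

theorem sa_finitely_generated {R V : Type*} [Semiring R] [AddCommMonoid V] [Module R V]
    (M : Finset R) (hM : IsAdditiveSpine R (M : Set R))
    (S : Finset V) (hS : Submodule.span R (S : Set V) = ⊤)
    (W : Submodule R V) (hW : IsSA W) :
    ∃ T : Finset V, T.card ≤ M.card * S.card ∧ Submodule.span R (T : Set V) = W := by
  classical
  set T : Finset V := ((M ×ˢ S).image (fun p => p.1 • p.2)).filter (· ∈ W) with hT
  refine ⟨T, ?_, ?_⟩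
  · calc T.card ≤ ((M ×ˢ S).image fun p => p.1 • p.2).card := Finset.card_filter_le _ _
      _ ≤ (M ×ˢ S).card := Finset.card_image_le
      _ = M.card * S.card := Finset.card_product _ _
  · -- key lemma : for c in the additive closure of the halo, x ∈ S, c•x ∈ W → c•x ∈ span T
    have key : ∀ c : R, c ∈ AddSubmonoid.closure (halo R (M : Set R)) →
        ∀ x ∈ S, c • x ∈ W → c • x ∈ Submodule.span R (T : Set V) := by
      intro c hc
      induction hc using AddSubmonoid.closure_induction with
      | mem c hcmem =>
        intro x hx hcxW
        obtain ⟨l, m, hlM, hml⟩ := hcmem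
        simp only [smul_eq_mul] at hlM hml
        have hlcx : (l * c) • x ∈ W := by
          rw [mul_smul]
          exact W.smul_mem l hcxW
        have hTmem : (l * c) • x ∈ T := by
          rw [hT, Finset.mem_filter]
          refine ⟨Finset.mem_image.mpr ⟨(l * c, x), Finset.mem_product.mpr ⟨hlM, hx⟩, rfl⟩, hlcx⟩
        have : c • x = m • ((l * c) • x) := by
          rw [← mul_smul, hml]
        rw [this]
        exact Submodule.smul_mem _ m (Submodule.subset_span hTmem)
      | zero =>
        intro x hx _
        rw [zero_smul]
        exact Submodule.zero_mem _
      | add a b ha hb iha ihb =>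
        intro x hx habW
        rw [add_smul] at habW ⊢
        obtain ⟨haW, hbW⟩ := hW _ _ habW
        exact Submodule.add_mem _ (iha x hx haW) (ihb x hx hbW)
    have hspanle : Submodule.span R (T : Set V) ≤ W := by
      rw [Submodule.span_le]
      intro v hv
      rw [hT] at hv
      simp only [Finset.coe_filter, Set.mem_setOf_eq] at hv
      exact hv.2
    refine le_antisymm hspanle ?_
    -- W ≤ span T : induct on the support finset
    have main : ∀ (s : Finset V), (↑s ⊆ (S : Set V)) → ∀ f : V → R,
        (∑ i ∈ s, f i • i) ∈ W → (∑ i ∈ s, f i • i) ∈ Submodule.span R (T : Set V) := by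
      intro s
      induction s using Finset.induction with
      | empty =>
        intro _ f _
        simp
      | insert x s hxs ih =>
        intro hsub f hsum
        rw [Finset.sum_insert hxs] at hsum ⊢
        obtain ⟨h1, h2⟩ := hW _ _ hsum
        have hxS : x ∈ S := hsub (by simp)
        have hc : f x ∈ AddSubmonoid.closure (halo R (M : Set R)) := by
          rw [hM]; trivial
        refine Submodule.add_mem _ (key (f x) hc x hxS h1) ?_
        exact ih (fun y hy => hsub (by simp [hy])) f h2
    intro w hw
    have hw' : w ∈ Submodule.span R (S : Set V) := by rw [hS]; trivial
    obtain ⟨f, -, hf⟩ := Submodule.mem_span_finset.mp hw'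
    rw [← hf] at hw ⊢
    exact main S (by simp) f hw
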